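/- For any episodic tabular MDP and any two policies π and π′: (i) for every h ∈ {1,…,H}, ‖d^π_h − d^{π′}_h‖₁ ≤ Σ_{ℓ=1}^{h−1} Σ_s d^{π′}_ℓ(s) · ‖π_ℓ(·|s) − π′_ℓ(·|s)‖₁ (the empty sum being 0 when h = 1); and (ii) for every h ∈ {1,…,H}, ‖P^π_h − P^{π′}_h‖₁ ≤ ‖d^π_h − d^{π′}_h‖₁ + Σ_s d^{π′}_h(s) · ‖π_h(·|s) − π′_h(·|s)‖₁. Here ‖·‖₁ denotes the sum of absolute values of all coordinates. -/

import Mathlib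

open Finset

/-- State distribution `d^π_h` of a policy `π` in an episodic tabular MDP
(time steps are 0-indexed: `stateDist ρ P π 0 = ρ`). -/
noncomputable def stateDist {S A : Type*} [Fintype S] [Fintype A] (ρ : S → ℝ)
    (P : ℕ → S → A → S → ℝ) (π : ℕ → S → A → ℝ) : ℕ → S → ℝ
  | 0 => ρ
  | h + 1 => fun s' => ∑ s : S, ∑ a : A, stateDist ρ P π h s * π h s a * P h s a s'

/-- State-action distribution `P^π_h(s,a) = d^π_h(s) π_h(a|s)`. -/
noncomputable def saDist {S A : Type*} [Fintype S] [Fintype A] (ρ : S → ℝ)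
    (P : ℕ → S → A → S → ℝ) (π : ℕ → S → A → ℝ) (h : ℕ) (s : S) (a : A) : ℝ :=
  stateDist ρ P π h s * π h s a

/-- Policy value `V^π = Σ_{h<H} Σ_{(s,a)} P^π_h(s,a) r_h(s,a)`. -/
noncomputable def policyValue {S A : Type*} [Fintype S] [Fintype A] (ρ : S → ℝ)
    (P : ℕ → S → A → S → ℝ) (π : ℕ → S → A → ℝ) (r : ℕ → S → A → ℝ) (H : ℕ) : ℝ :=
  ∑ h ∈ Finset.range H, ∑ s : S, ∑ a : A, saDist ρ P π h s a * r h s a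

/-- `π` is a (Markovian, non-stationary) policy. -/
def IsPolicy {S A : Type*} [Fintype A] (π : ℕ → S → A → ℝ) : Prop :=
  ∀ h s, (∀ a, 0 ≤ π h s a) ∧ (∑ a : A, π h s a) = 1

/-- `P` is a transition function. -/
def IsTransition {S A : Type*} [Fintype S] (P : ℕ → S → A → S → ℝ) : Prop :=
  ∀ h s a, (∀ s', 0 ≤ P h s a s') ∧ (∑ s' : S, P h s a s') = 1

/-- `ρ` is an initial state distribution. -/
def IsInitDist {S : Type*} [Fintype S] (ρ : S → ℝ) : Prop :=
  (∀ s, 0 ≤ ρ s) ∧ (∑ s : S, ρ s) = 1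

/-- Rewards take values in `[0,1]`. -/
def IsReward {S A : Type*} (r : ℕ → S → A → ℝ) : Prop :=
  ∀ h s a, 0 ≤ r h s a ∧ r h s a ≤ 1

/-- The VAIL state-action distribution matching objective
`L(π) = Σ_{h<H} Σ_{(s,a)} |P^π_h(s,a) − Q_h(s,a)|`. -/
noncomputable def vailLoss {S A : Type*} [Fintype S] [Fintype A] (ρ : S → ℝ)
    (P : ℕ → S → A → S → ℝ) (π : ℕ → S → A → ℝ) (Q : ℕ → S → A → ℝ) (H : ℕ) : ℝ :=
  ∑ h ∈ Finset.range H, ∑ s : S, ∑ a : A, |saDist ρ P π h s a - Q h s a|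

lemma stateDist_nonneg {S A : Type*} [Fintype S] [Fintype A] (ρ : S → ℝ)
    (P : ℕ → S → A → S → ℝ) (π : ℕ → S → A → ℝ)
    (hρ : IsInitDist ρ) (hP : IsTransition P) (hπ : IsPolicy π) :
    ∀ h s, 0 ≤ stateDist ρ P π h s := by
  intro h
  induction h with
  | zero => exact hρ.1
  | succ h ih =>
    intro s'
    simp only [stateDist]
    refine Finset.sum_nonneg fun s _ => Finset.sum_nonneg fun a _ => ?_
    exact mul_nonneg (mul_nonneg (ih s) ((hπ h s).1 a)) ((hP h s a).1 s')

lemma sa_l1_bound {S A : Type*} [Fintype S] [Fintype A]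
    (d d' : S → ℝ) (p p' : S → A → ℝ)
    (hd' : ∀ s, 0 ≤ d' s) (hp : ∀ s a, 0 ≤ p s a) (hp1 : ∀ s, ∑ a : A, p s a = 1) :
    ∑ s : S, ∑ a : A, |d s * p s a - d' s * p' s a|
      ≤ (∑ s : S, |d s - d' s|) + ∑ s : S, d' s * ∑ a : A, |p s a - p' s a| := by
  rw [← Finset.sum_add_distrib]
  apply Finset.sum_le_sum
  intro s _
  calc ∑ a : A, |d s * p s a - d' s * p' s a|
      ≤ ∑ a : A, (|d s - d' s| * p s a + d' s * |p s a - p' s a|) := by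
        apply Finset.sum_le_sum; intro a _
        have e : d s * p s a - d' s * p' s a
            = (d s - d' s) * p s a + d' s * (p s a - p' s a) := by ring
        rw [e]
        refine (abs_add_le _ _).trans ?_
        rw [abs_mul, abs_mul, abs_of_nonneg (hp s a), abs_of_nonneg (hd' s)]
    _ = |d s - d' s| + d' s * ∑ a : A, |p s a - p' s a| := by
        rw [Finset.sum_add_distrib, ← Finset.mul_sum, ← Finset.mul_sum, hp1 s, mul_one]

/-- for any episodic tabular MDP and any two policies `π`, `π'`:
(i) the ℓ₁-distance between state distributions at time `h` is bounded by the accumulated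
ℓ₁ policy disagreement weighted by `d^{π'}_ℓ` over earlier times, and
(ii) the ℓ₁-distance between state-action distributions at time `h` is bounded by the
state-distribution distance plus the `d^{π'}_h`-weighted policy disagreement at time `h`.
(Time steps are 0-indexed: `h` here corresponds to `h+1` in the 1-indexed statement.) -/
theorem stateDist_saDist_l1_bounds {S A : Type*} [Fintype S] [Fintype A]
    [Nonempty S] [Nonempty A]
    (ρ : S → ℝ) (P : ℕ → S → A → S → ℝ) (r : ℕ → S → A → ℝ)
    (π π' : ℕ → S → A → ℝ) (H : ℕ) (hH : 1 ≤ H)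
    (hρ : IsInitDist ρ) (hP : IsTransition P) (hr : IsReward r)
    (hπ : IsPolicy π) (hπ' : IsPolicy π') :
    (∀ h < H,
      (∑ s : S, |stateDist ρ P π h s - stateDist ρ P π' h s|)
        ≤ ∑ ℓ ∈ Finset.range h, ∑ s : S,
            stateDist ρ P π' ℓ s * ∑ a : A, |π ℓ s a - π' ℓ s a|) ∧
    (∀ h < H,
      (∑ s : S, ∑ a : A, |saDist ρ P π h s a - saDist ρ P π' h s a|)
        ≤ (∑ s : S, |stateDist ρ P π h s - stateDist ρ P π' h s|)
          + ∑ s : S, stateDist ρ P π' h s * ∑ a : A, |π h s a - π' h s a|) := by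
  have key : ∀ h, ∑ s : S, ∑ a : A, |saDist ρ P π h s a - saDist ρ P π' h s a|
      ≤ (∑ s : S, |stateDist ρ P π h s - stateDist ρ P π' h s|)
        + ∑ s : S, stateDist ρ P π' h s * ∑ a : A, |π h s a - π' h s a| := by
    intro h
    exact sa_l1_bound _ _ _ _ (stateDist_nonneg ρ P π' hρ hP hπ' h)
      (fun s a => (hπ h s).1 a) (fun s => (hπ h s).2)
  have part1 : ∀ h, (∑ s : S, |stateDist ρ P π h s - stateDist ρ P π' h s|)
      ≤ ∑ ℓ ∈ Finset.range h, ∑ s : S,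
          stateDist ρ P π' ℓ s * ∑ a : A, |π ℓ s a - π' ℓ s a| := by
    intro h
    induction h with
    | zero => simp [stateDist]
    | succ h ih =>
      rw [Finset.sum_range_succ]
      calc ∑ s' : S, |stateDist ρ P π (h+1) s' - stateDist ρ P π' (h+1) s'|
          = ∑ s' : S, |∑ s : S, ∑ a : A,
              (stateDist ρ P π h s * π h s a - stateDist ρ P π' h s * π' h s a)
                * P h s a s'| := by
            apply Finset.sum_congr rfl
            intro s' _
            congr 1
            simp only [stateDist, ← Finset.sum_sub_distrib]
            apply Finset.sum_congr rfl; intro s _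
            apply Finset.sum_congr rfl; intro a _
            ring
        _ ≤ ∑ s' : S, ∑ s : S, ∑ a : A,
              |stateDist ρ P π h s * π h s a - stateDist ρ P π' h s * π' h s a|
                * P h s a s' := by
            apply Finset.sum_le_sum; intro s' _
            refine (Finset.abs_sum_le_sum_abs _ _).trans ?_
            apply Finset.sum_le_sum; intro s _
            refine (Finset.abs_sum_le_sum_abs _ _).trans ?_
            apply Finset.sum_le_sum; intro a _
            rw [abs_mul, abs_of_nonneg ((hP h s a).1 s')]
        _ = ∑ s : S, ∑ a : A,
              |stateDist ρ P π h s * π h s a - stateDist ρ P π' h s * π' h s a| := by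
            rw [Finset.sum_comm]
            apply Finset.sum_congr rfl; intro s _
            rw [Finset.sum_comm]
            apply Finset.sum_congr rfl; intro a _
            rw [← Finset.mul_sum, (hP h s a).2, mul_one]
        _ ≤ (∑ s : S, |stateDist ρ P π h s - stateDist ρ P π' h s|)
              + ∑ s : S, stateDist ρ P π' h s * ∑ a : A, |π h s a - π' h s a| :=
            sa_l1_bound _ _ _ _ (stateDist_nonneg ρ P π' hρ hP hπ' h)
              (fun s a => (hπ h s).1 a) (fun s => (hπ h s).2)
        _ ≤ _ := by exact add_le_add ih le_rfl
  exact ⟨fun h _ => part1 h, fun h _ => key h⟩
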